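/- arXiv:2404.07147 — 3 statements merged into one kernel-verified Lean document; each statement's English description precedes it below -/
import Mathlib

section
/- Let E be a finite set with h = |E| ≥ 1, let (λ_e)_{e∈E} be independent random variables each uniformly distributed on [0,1], and fix e₀ ∈ E. Then for every δ ∈ [0,1], P(λ_{e₀} < λ_e ≤ λ_{e₀} + δ for all e ∈ E \ {e₀}) = δ^{h−1}(1−δ) + δ^h / h. -/
open MeasureTheory ProbabilityTheory

noncomputable def mu0 : Measure ℝ := (volume : Measure ℝ).restrict (Set.Icc 0 1)

instance : IsProbabilityMeasure mu0 := by
  constructor; unfold mu0; simp [Real.volume_Icc]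

instance : SigmaFinite mu0 := by unfold mu0; infer_instance



lemma joint_law
    {Ω : Type*} [MeasurableSpace Ω] (P : Measure Ω) [IsProbabilityMeasure P]
    {E : Type*} [Fintype E]
    (lam : E → Ω → ℝ) (hmeas : ∀ e, Measurable (lam e))
    (hindep : iIndepFun lam P)
    (hunif : ∀ e, Measure.map (lam e) P = (volume : Measure ℝ).restrict (Set.Icc 0 1)) :
    Measure.map (fun ω i => lam i ω) P
      = Measure.pi (fun _ : E => (volume : Measure ℝ).restrict (Set.Icc 0 1)) := by
  refine (Measure.pi_eq (fun s hs => ?_)).symm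
  rw [Measure.map_apply (measurable_pi_lambda _ (fun i => hmeas i))
    (MeasurableSet.univ_pi (fun i => hs i))]
  have : (fun ω i => lam i ω) ⁻¹' (Set.pi Set.univ s) = ⋂ i, lam i ⁻¹' s i := by
    ext ω; simp [Set.mem_pi]
  rw [this, hindep.meas_iInter (fun i => ⟨s i, hs i, rfl⟩)]
  congr 1
  ext i
  rw [← hunif i, Measure.map_apply (hmeas i) (hs i)]

lemma meas_Ioc (δ : ℝ) (hδ0 : 0 ≤ δ) : Measurable fun t : ℝ => mu0 (Set.Ioc t (t + δ)) := by
  have hIic : Measurable fun t : ℝ => mu0 (Set.Iic t) :=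
    Monotone.measurable (fun a b hab => measure_mono (Set.Iic_subset_Iic.2 hab))
  have key : ∀ t : ℝ, mu0 (Set.Ioc t (t + δ)) = mu0 (Set.Iic (t + δ)) - mu0 (Set.Iic t) := by
    intro t
    rw [← Set.Iic_sdiff_Iic, measure_diff (Set.Iic_subset_Iic.2 (by linarith))
      measurableSet_Iic.nullMeasurableSet (measure_ne_top _ _)]
  simp_rw [key]
  exact (hIic.comp (measurable_id.add_const δ)).sub hIic

lemma pi_apply {E : Type*} [Fintype E] (e₀ : E) (δ : ℝ) (hδ0 : 0 ≤ δ) :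
    Measure.pi (fun _ : E => mu0) {f : E → ℝ | ∀ e, e ≠ e₀ → f e₀ < f e ∧ f e ≤ f e₀ + δ}
      = ∫⁻ t, (mu0 (Set.Ioc t (t + δ))) ^ (Fintype.card E - 1) ∂mu0 := by
  classical
  set T := MeasurableEquiv.piEquivPiSubtypeProd (fun _ : E => ℝ) (fun e => e = e₀) with hTdef
  have hT := measurePreserving_piEquivPiSubtypeProd (fun _ : E => mu0) (fun e => e = e₀)
  set B : Set ((∀ _ : {e : E // e = e₀}, ℝ) × (∀ _ : {e : E // ¬ e = e₀}, ℝ)) :=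
    {q | ∀ i : {e : E // ¬ e = e₀}, q.1 ⟨e₀, rfl⟩ < q.2 i ∧ q.2 i ≤ q.1 ⟨e₀, rfl⟩ + δ} with hBdef
  have hBmeas : MeasurableSet B := by
    have : B = ⋂ i : {e : E // ¬ e = e₀}, {q : (∀ _ : {e : E // e = e₀}, ℝ) ×
        (∀ _ : {e : E // ¬ e = e₀}, ℝ) | q.1 ⟨e₀, rfl⟩ < q.2 i ∧ q.2 i ≤ q.1 ⟨e₀, rfl⟩ + δ} := by
      ext q; simp [hBdef]
    rw [this]
    refine MeasurableSet.iInter (fun i => MeasurableSet.inter ?_ ?_)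
    · exact measurableSet_lt ((measurable_pi_apply _).comp measurable_fst)
        ((measurable_pi_apply _).comp measurable_snd)
    · exact measurableSet_le ((measurable_pi_apply _).comp measurable_snd)
        (by fun_prop)
  have hA : {f : E → ℝ | ∀ e, e ≠ e₀ → f e₀ < f e ∧ f e ≤ f e₀ + δ} = T ⁻¹' B := by
    ext f
    simp only [Set.mem_preimage, hBdef, Set.mem_setOf_eq, hTdef,
      MeasurableEquiv.piEquivPiSubtypeProd, Equiv.piEquivPiSubtypeProd,
      MeasurableEquiv.coe_mk, Equiv.coe_fn_mk, Subtype.forall]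
  rw [hA, hT.measure_preimage hBmeas.nullMeasurableSet, Measure.prod_apply hBmeas]
  have hslice : ∀ x : ∀ _ : {e : E // e = e₀}, ℝ,
      (Measure.pi fun _ : {e : E // ¬ e = e₀} => mu0) (Prod.mk x ⁻¹' B)
        = (mu0 (Set.Ioc (x ⟨e₀, rfl⟩) (x ⟨e₀, rfl⟩ + δ))) ^ (Fintype.card E - 1) := by
    intro x
    have hpre : Prod.mk x ⁻¹' B
        = Set.pi Set.univ (fun _ : {e : E // ¬ e = e₀} =>
            Set.Ioc (x ⟨e₀, rfl⟩) (x ⟨e₀, rfl⟩ + δ)) := by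
      ext g; simp [hBdef, Set.mem_pi, Set.mem_Ioc]
    rw [hpre, Measure.pi_pi]
    rw [Finset.prod_const, Finset.card_univ]
    congr 1
    rw [Fintype.card_subtype_compl, Fintype.card_subtype_eq]
  simp_rw [hslice]
  have hU := measurePreserving_piUnique (fun _ : {e : E // e = e₀} => mu0)
  have hdef : (default : {e : E // e = e₀}) = ⟨e₀, rfl⟩ := rfl
  have := hU.lintegral_comp (f := fun t => (mu0 (Set.Ioc t (t + δ))) ^ (Fintype.card E - 1)) ?_
  · rw [← this]
    congr!
  · exact (meas_Ioc δ hδ0).pow_const _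

lemma integral_calc (h : ℕ) (hh1 : 1 ≤ h) (δ : ℝ) (hδ0 : 0 ≤ δ) (hδ1 : δ ≤ 1) :
    ∫⁻ t, (mu0 (Set.Ioc t (t + δ))) ^ (h - 1) ∂mu0
      = ENNReal.ofReal (δ ^ (h - 1) * (1 - δ) + δ ^ h / (h : ℝ)) := by
  have hval : ∀ t ∈ Set.Icc (0:ℝ) 1,
      (mu0 (Set.Ioc t (t + δ))) ^ (h - 1) = ENNReal.ofReal ((min δ (1 - t)) ^ (h - 1)) := by
    intro t ht
    obtain ⟨ht0, ht1⟩ := ht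
    have hset : Set.Ioc t (t + δ) ∩ Set.Icc 0 1 = Set.Ioc t (min (t + δ) 1) := by
      ext y
      simp only [Set.mem_inter_iff, Set.mem_Ioc, Set.mem_Icc, le_min_iff]
      constructor
      · rintro ⟨⟨h1, h2⟩, h3, h4⟩; exact ⟨h1, h2, h4⟩
      · rintro ⟨h1, h2, h3⟩; exact ⟨⟨h1, h2⟩, le_of_lt (lt_of_le_of_lt ht0 h1), h3⟩
    have hmu : mu0 (Set.Ioc t (t + δ)) = ENNReal.ofReal (min δ (1 - t)) := by
      rw [mu0, Measure.restrict_apply measurableSet_Ioc, hset, Real.volume_Ioc]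
      congr 1
      rcases le_total (t + δ) 1 with hc | hc
      · rw [min_eq_left hc, min_eq_left (by linarith)]; ring
      · rw [min_eq_right hc, min_eq_right (by linarith)]
    rw [hmu, ← ENNReal.ofReal_pow (le_min hδ0 (by linarith))]
  have hcont : Continuous fun t : ℝ => (min δ (1 - t)) ^ (h - 1) :=
    (continuous_const.min (continuous_const.sub continuous_id)).pow _
  calc ∫⁻ t, (mu0 (Set.Ioc t (t + δ))) ^ (h - 1) ∂mu0
      = ∫⁻ t in Set.Icc (0:ℝ) 1, ENNReal.ofReal ((min δ (1 - t)) ^ (h - 1)) := by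
        rw [mu0]
        exact setLIntegral_congr_fun measurableSet_Icc hval
    _ = ENNReal.ofReal (∫ t in Set.Icc (0:ℝ) 1, (min δ (1 - t)) ^ (h - 1)) := by
        rw [ofReal_integral_eq_lintegral_ofReal
          (hcont.integrableOn_Icc)
          ((ae_restrict_iff' measurableSet_Icc).2 (Filter.Eventually.of_forall
            fun t ht => pow_nonneg (le_min hδ0 (by linarith [ht.2])) _))]
    _ = ENNReal.ofReal (δ ^ (h - 1) * (1 - δ) + δ ^ h / (h : ℝ)) := by
        congr 1
        rw [integral_Icc_eq_integral_Ioc, ← intervalIntegral.integral_of_le zero_le_one]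
        have hsplit := intervalIntegral.integral_add_adjacent_intervals
          (a := 0) (b := 1 - δ) (c := 1) (μ := volume)
          (hcont.intervalIntegrable _ _) (hcont.intervalIntegrable _ _)
        rw [← hsplit]
        have h1 : (∫ t in (0:ℝ)..(1 - δ), (min δ (1 - t)) ^ (h - 1))
            = δ ^ (h - 1) * (1 - δ) := by
          rw [intervalIntegral.integral_congr (g := fun _ => δ ^ (h - 1))
            (fun t ht => ?_), intervalIntegral.integral_const]
          · rw [smul_eq_mul]; ring
          · rw [Set.uIcc_of_le (by linarith)] at ht
            rw [min_eq_left (by linarith [ht.2])]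
        have h2 : (∫ t in (1 - δ:ℝ)..1, (min δ (1 - t)) ^ (h - 1)) = δ ^ h / (h : ℝ) := by
          rw [intervalIntegral.integral_congr (g := fun t => (1 - t) ^ (h - 1))
            (fun t ht => ?_)]
          · have := intervalIntegral.integral_comp_sub_left
              (a := 1 - δ) (b := 1) (fun x => x ^ (h - 1)) 1
            simp only [sub_self, sub_sub_cancel] at this
            rw [this, integral_pow, Nat.sub_add_cancel hh1, zero_pow (by omega), sub_zero]
            congr 1
            norm_cast
            omega
          · rw [Set.uIcc_of_le (by linarith)] at ht
            rw [min_eq_right (by linarith [ht.1])]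
        rw [h1, h2]

/-- For independent uniform-[0,1] labels `lam e`, `e ∈ E`, with `|E| = h ≥ 1`,
a fixed `e₀ ∈ E`, and any `δ ∈ [0,1]`,
`P(lam e₀ < lam e ≤ lam e₀ + δ for all e ≠ e₀) = δ^(h-1) (1-δ) + δ^h / h`. -/
theorem stmt4
    {Ω : Type*} [MeasurableSpace Ω] (P : Measure Ω) [IsProbabilityMeasure P]
    {E : Type*} [Fintype E] (h : ℕ) (hh : Fintype.card E = h) (hh1 : 1 ≤ h)
    (lam : E → Ω → ℝ) (hmeas : ∀ e, Measurable (lam e))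
    (hindep : iIndepFun lam P)
    (hunif : ∀ e, Measure.map (lam e) P = (volume : Measure ℝ).restrict (Set.Icc 0 1))
    (e₀ : E) (δ : ℝ) (hδ0 : 0 ≤ δ) (hδ1 : δ ≤ 1) :
    P {ω | ∀ e : E, e ≠ e₀ → lam e₀ ω < lam e ω ∧ lam e ω ≤ lam e₀ ω + δ}
      = ENNReal.ofReal (δ ^ (h - 1) * (1 - δ) + δ ^ h / (h : ℝ)) := by
  classical
  have hA : MeasurableSet {f : E → ℝ | ∀ e, e ≠ e₀ → f e₀ < f e ∧ f e ≤ f e₀ + δ} := by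
    have hset : {f : E → ℝ | ∀ e, e ≠ e₀ → f e₀ < f e ∧ f e ≤ f e₀ + δ}
        = ⋂ e, ⋂ (_ : e ≠ e₀), {f : E → ℝ | f e₀ < f e ∧ f e ≤ f e₀ + δ} := by
      ext f; simp
    rw [hset]
    exact MeasurableSet.iInter fun e => MeasurableSet.iInter fun _ =>
      (measurableSet_lt (measurable_pi_apply e₀) (measurable_pi_apply e)).inter
      (measurableSet_le (measurable_pi_apply e) (by fun_prop))
  have hpre : {ω | ∀ e : E, e ≠ e₀ → lam e₀ ω < lam e ω ∧ lam e ω ≤ lam e₀ ω + δ}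
      = (fun ω i => lam i ω) ⁻¹'
        {f : E → ℝ | ∀ e, e ≠ e₀ → f e₀ < f e ∧ f e ≤ f e₀ + δ} := rfl
  rw [hpre, ← Measure.map_apply (measurable_pi_lambda _ fun i => hmeas i) hA,
    joint_law P lam hmeas hindep hunif]
  have hmu : (Measure.pi (fun _ : E => (volume : Measure ℝ).restrict (Set.Icc 0 1)))
      = Measure.pi (fun _ : E => mu0) := rfl
  rw [hmu, pi_apply e₀ δ hδ0, hh, integral_calc h hh1 δ hδ0 hδ1]
end

section
/- Let n ≥ 2, let (K_n, λ) be a random simple temporal graph on n vertices, let δ ∈ [0,1], and let k be an integer with 2 ≤ k ≤ n. Then the expected number of δ-temporal cliques of size k satisfies E[X^{(k)}] = C(n,k) · ( C(k,2) · δ^{C(k,2)−1} · (1−δ) + δ^{C(k,2)} ), where C(a,b) denotes the binomial coefficient. -/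
open MeasureTheory ProbabilityTheory

/-- The edge set of the complete graph `K_n` on vertex set `Fin n`:
unordered pairs of distinct vertices. -/
def EdgeKn (n : ℕ) : Type := {e : Sym2 (Fin n) // ¬ e.IsDiag}

/-- `Q` is a `δ`-temporal clique for the labeling `lam` if any two edges with
both endpoints in `Q` carry labels at most `δ` apart. -/
def IsTemporalClique {n : ℕ} (lam : EdgeKn n → ℝ) (δ : ℝ) (Q : Finset (Fin n)) : Prop :=
  ∀ e e' : EdgeKn n, (∀ v ∈ e.1, v ∈ Q) → (∀ v ∈ e'.1, v ∈ Q) →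
    |lam e - lam e'| ≤ δ

open scoped Classical in
/-- The number of `k`-element vertex subsets of `Fin n` that are `δ`-temporal cliques. -/
noncomputable def cliqueCount {n : ℕ} (lam : EdgeKn n → ℝ) (δ : ℝ) (k : ℕ) : ℕ :=
  ((Finset.univ.powersetCard k).filter (fun Q => IsTemporalClique lam δ Q)).card

instance inst_s5 : IsProbabilityMeasure mu0 :=
  ⟨by simp [mu0, Measure.restrict_apply_univ, Real.volume_Icc]⟩

lemma mu0_singleton (a : ℝ) : mu0 ({a} : Set ℝ) = 0 := by
  rw [mu0, Measure.restrict_apply (measurableSet_singleton a)]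
  exact measure_mono_null Set.inter_subset_left (Real.volume_singleton)

lemma mu0_Icc {a δ : ℝ} (ha : a ∈ Set.Icc (0:ℝ) 1) :
    mu0 (Set.Icc a (a + δ)) = ENNReal.ofReal (min (a + δ) 1 - a) := by
  rw [mu0, Measure.restrict_apply measurableSet_Icc, Set.Icc_inter_Icc, Real.volume_Icc]
  congr 1
  rw [max_eq_left ha.1]

lemma diag_null (r : ℕ) (i j : Fin (r + 1)) (hij : i ≠ j) :
    Measure.pi (fun _ : Fin (r + 1) => mu0) {x | x i = x j} = 0 := by
  obtain ⟨j', hj'⟩ := Fin.exists_succAbove_eq hij.symm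
  have MP := measurePreserving_piFinSuccAbove (fun _ : Fin (r + 1) => mu0) i
  set e := MeasurableEquiv.piFinSuccAbove (fun _ : Fin (r + 1) => ℝ) i with he
  have hS : MeasurableSet {p : ℝ × (Fin r → ℝ) | p.1 = p.2 j'} :=
    measurableSet_eq_fun measurable_fst ((measurable_pi_apply j').comp measurable_snd)
  have hpre : {x : Fin (r + 1) → ℝ | x i = x j} = e ⁻¹' {p : ℝ × (Fin r → ℝ) | p.1 = p.2 j'} := by
    ext x
    simp [he, MeasurableEquiv.piFinSuccAbove, Fin.insertNthEquiv, Fin.removeNth, ← hj']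
  rw [hpre, MP.measure_preimage hS.nullMeasurableSet, Measure.prod_apply hS]
  have h1 : ∀ a : ℝ, (Prod.mk a ⁻¹' {p : ℝ × (Fin r → ℝ) | p.1 = p.2 j'})
      = Function.eval j' ⁻¹' ({a} : Set ℝ) := by
    intro a; ext y; simp [eq_comm]
  have hz : ∀ a : ℝ, Measure.pi (fun _ : Fin r => mu0) (Function.eval j' ⁻¹' ({a} : Set ℝ)) = 0 :=
    fun a => Measure.pi_eval_preimage_null _ (mu0_singleton a)
  simp [h1, hz]

lemma real_int (r : ℕ) {δ : ℝ} (h0 : 0 ≤ δ) (h1 : δ ≤ 1) :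
    ∫ a in Set.Icc (0:ℝ) 1, (min (a + δ) 1 - a) ^ r
      = (1 - δ) * δ ^ r + δ ^ (r + 1) / (r + 1) := by
  have hcont : Continuous fun a : ℝ => (min (a + δ) 1 - a) ^ r :=
    (((continuous_id.add continuous_const).min continuous_const).sub continuous_id).pow r
  have h01 : (0:ℝ) ≤ 1 - δ := by linarith
  have h11 : (1:ℝ) - δ ≤ 1 := by linarith
  rw [MeasureTheory.integral_Icc_eq_integral_Ioc,
    ← intervalIntegral.integral_of_le (by norm_num : (0:ℝ) ≤ 1),
    ← intervalIntegral.integral_add_adjacent_intervals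
      (hcont.intervalIntegrable 0 (1 - δ)) (hcont.intervalIntegrable (1 - δ) 1)]
  have e1 : ∫ a in (0:ℝ)..(1 - δ), (min (a + δ) 1 - a) ^ r = (1 - δ) * δ ^ r := by
    rw [intervalIntegral.integral_congr (g := fun _ => δ ^ r) ?_, intervalIntegral.integral_const,
      smul_eq_mul, sub_zero]
    intro a ha
    rw [Set.uIcc_of_le h01] at ha
    show (min (a + δ) 1 - a) ^ r = δ ^ r
    rw [min_eq_left (by linarith [ha.2] : a + δ ≤ 1), add_sub_cancel_left]
  have e2 : ∫ a in (1 - δ:ℝ)..1, (min (a + δ) 1 - a) ^ r = δ ^ (r + 1) / (r + 1) := by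
    rw [intervalIntegral.integral_congr (g := fun a => (1 - a) ^ r) ?_]
    · have := intervalIntegral.integral_comp_sub_left (a := 1 - δ) (b := 1)
        (fun x : ℝ => x ^ r) 1
      rw [this]
      norm_num [integral_pow]
    · intro a ha
      rw [Set.uIcc_of_le h11] at ha
      show (min (a + δ) 1 - a) ^ r = (1 - a) ^ r
      rw [min_eq_right (by linarith [ha.1] : (1:ℝ) ≤ a + δ)]
  rw [e1, e2]

lemma measA (r : ℕ) {δ : ℝ} (h0 : 0 ≤ δ) (h1 : δ ≤ 1) (i : Fin (r + 1)) :
    Measure.pi (fun _ : Fin (r + 1) => mu0) {x | ∀ j, x i ≤ x j ∧ x j ≤ x i + δ}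
      = ENNReal.ofReal ((1 - δ) * δ ^ r + δ ^ (r + 1) / (r + 1)) := by
  have MP := measurePreserving_piFinSuccAbove (fun _ : Fin (r + 1) => mu0) i
  set e := MeasurableEquiv.piFinSuccAbove (fun _ : Fin (r + 1) => ℝ) i with he
  set S : Set (ℝ × (Fin r → ℝ)) := {p | ∀ j', p.1 ≤ p.2 j' ∧ p.2 j' ≤ p.1 + δ} with hSdef
  have hS : MeasurableSet S := by
    have : S = ⋂ j', {p : ℝ × (Fin r → ℝ) | p.1 ≤ p.2 j'} ∩ {p | p.2 j' ≤ p.1 + δ} := by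
      ext p; simp [hSdef, Set.mem_iInter, forall_and]
    rw [this]
    refine MeasurableSet.iInter fun j' => MeasurableSet.inter ?_ ?_
    · exact measurableSet_le (measurable_fst (α := ℝ) (β := Fin r → ℝ)) measurable_snd.eval
    · exact measurableSet_le measurable_snd.eval (measurable_fst.add measurable_const)
  have hpre : {x : Fin (r+1) → ℝ | ∀ j, x i ≤ x j ∧ x j ≤ x i + δ} = e ⁻¹' S := by
    ext x
    simp only [he, Set.mem_preimage, Set.mem_setOf_eq, hSdef,
      MeasurableEquiv.piFinSuccAbove_apply, Fin.removeNth]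
    constructor
    · intro h j'; exact h (i.succAbove j')
    · intro h j
      rcases eq_or_ne j i with rfl | hne
      · exact ⟨le_refl _, le_add_of_nonneg_right h0⟩
      · obtain ⟨j', rfl⟩ := Fin.exists_succAbove_eq hne
        exact h j'
  rw [hpre, MP.measure_preimage hS.nullMeasurableSet, Measure.prod_apply hS]
  have hsec : ∀ a : ℝ, (Prod.mk a ⁻¹' S) = Set.pi Set.univ (fun _ : Fin r => Set.Icc a (a + δ)) := by
    intro a; ext y; simp [hSdef, Set.mem_pi, Set.mem_Icc, forall_and, Pi.le_def]
  have heval : ∀ a : ℝ, Measure.pi (fun _ : Fin r => mu0) (Prod.mk a ⁻¹' S)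
      = (mu0 (Set.Icc a (a + δ))) ^ r := by
    intro a
    rw [hsec a, Measure.pi_pi, Finset.prod_const, Finset.card_univ, Fintype.card_fin]
  simp only [heval]
  have hcong : ∫⁻ a, (mu0 (Set.Icc a (a + δ))) ^ r ∂mu0
      = ∫⁻ a in Set.Icc (0:ℝ) 1, ENNReal.ofReal ((min (a + δ) 1 - a) ^ r) := by
    rw [mu0]
    refine setLIntegral_congr_fun measurableSet_Icc (fun a ha => ?_)
    rw [show (volume : Measure ℝ).restrict (Set.Icc 0 1) = mu0 from rfl, mu0_Icc ha,
      ← ENNReal.ofReal_pow]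
    have : a ≤ min (a + δ) 1 := le_min (le_add_of_nonneg_right h0) ha.2
    linarith
  rw [hcong, ← ofReal_integral_eq_lintegral_ofReal, real_int r h0 h1]
  · exact (((((continuous_id.add continuous_const).min continuous_const).sub
      continuous_id).pow r)).integrableOn_Icc
  · refine (ae_restrict_iff' measurableSet_Icc).2 (ae_of_all _ fun a ha => ?_)
    have : a ≤ min (a + δ) 1 := le_min (le_add_of_nonneg_right h0) ha.2
    exact pow_nonneg (by linarith) r

lemma core (r : ℕ) {δ : ℝ} (h0 : 0 ≤ δ) (h1 : δ ≤ 1) :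
    Measure.pi (fun _ : Fin (r + 1) => mu0) {x | ∀ i j, |x i - x j| ≤ δ}
      = ENNReal.ofReal ((r + 1) * δ ^ r * (1 - δ) + δ ^ (r + 1)) := by
  set ν := Measure.pi (fun _ : Fin (r + 1) => mu0) with hν
  set A : Fin (r + 1) → Set (Fin (r + 1) → ℝ) :=
    fun i => {x | ∀ j, x i ≤ x j ∧ x j ≤ x i + δ} with hA
  have hAm : ∀ i, MeasurableSet (A i) := by
    intro i
    have : A i = ⋂ j, {x : Fin (r+1) → ℝ | x i ≤ x j} ∩ {x | x j ≤ x i + δ} := by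
      ext x; simp [hA, Set.mem_iInter, forall_and]
    rw [this]
    exact MeasurableSet.iInter fun j =>
      (measurableSet_le (measurable_pi_apply i) (measurable_pi_apply j)).inter
      (measurableSet_le (measurable_pi_apply j) ((measurable_pi_apply i).add measurable_const))
  have hE : {x : Fin (r+1) → ℝ | ∀ i j, |x i - x j| ≤ δ} = ⋃ i, A i := by
    ext x
    simp only [Set.mem_setOf_eq, Set.mem_iUnion, hA]
    constructor
    · intro h
      obtain ⟨i, -, hi⟩ := Finset.exists_min_image Finset.univ x ⟨0, Finset.mem_univ 0⟩
      refine ⟨i, fun j => ⟨hi j (Finset.mem_univ j), ?_⟩⟩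
      have := abs_le.1 (h j i)
      linarith [this.2]
    · rintro ⟨i, hi⟩ j k
      have hj := hi j
      have hk := hi k
      rw [abs_le]
      constructor <;> linarith [hj.1, hj.2, hk.1, hk.2]
  rw [hE, measure_iUnion₀ ?_ (fun i => (hAm i).nullMeasurableSet)]
  · rw [tsum_fintype]
    have : ∀ i : Fin (r+1), ν (A i)
        = ENNReal.ofReal ((1 - δ) * δ ^ r + δ ^ (r + 1) / (r + 1)) := fun i => measA r h0 h1 i
    simp only [this]
    rw [Finset.sum_const, Finset.card_univ, Fintype.card_fin, nsmul_eq_mul,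
      show ((r + 1 : ℕ) : ENNReal) = ENNReal.ofReal ((r : ℝ) + 1) by
        rw [← ENNReal.ofReal_natCast]; norm_num,
      ← ENNReal.ofReal_mul (by positivity)]
    congr 1
    have hr1 : (r : ℝ) + 1 ≠ 0 := by positivity
    field_simp
  · intro i j hij
    refine measure_mono_null ?_ (diag_null r i j hij)
    rintro x ⟨hxi, hxj⟩
    exact le_antisymm (hxi j).1 (hxj i).1

lemma indep_map_pi {ι : Type*} [Fintype ι] {Ω : Type*} [MeasurableSpace Ω]
    {P : Measure Ω} [IsProbabilityMeasure P]
    (f : ι → Ω → ℝ) (hm : ∀ i, Measurable (f i))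
    (h : iIndepFun f P) :
    Measure.map (fun ω i => f i ω) P = Measure.pi (fun i => Measure.map (f i) P) := by
  haveI : ∀ i, IsProbabilityMeasure (Measure.map (f i) P) :=
    fun i => Measure.isProbabilityMeasure_map (hm i).aemeasurable
  refine (Measure.pi_eq fun s hs => ?_).symm
  rw [Measure.map_apply (measurable_pi_lambda _ hm) (MeasurableSet.univ_pi hs)]
  have hpre : (fun ω i => f i ω) ⁻¹' Set.pi Set.univ s = ⋂ i, f i ⁻¹' s i := by
    ext ω; simp [Set.mem_pi]
  rw [hpre, h.meas_iInter fun i => ⟨s i, hs i, rfl⟩]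
  exact Finset.prod_congr rfl fun i _ => (Measure.map_apply (hm i) (hs i)).symm

instance (n : ℕ) : Fintype (EdgeKn n) := by unfold EdgeKn; infer_instance

lemma card_edges_in (n : ℕ) (Q : Finset (Fin n)) :
    Fintype.card {e : EdgeKn n // ∀ v ∈ e.1, v ∈ Q} = Q.card.choose 2 := by
  classical
  have hcard : Fintype.card {a : Sym2 ↥Q // ¬a.IsDiag} = Q.card.choose 2 := by
    rw [Sym2.card_subtype_not_diag, Fintype.card_coe]
  rw [← hcard]
  refine (Fintype.card_congr (Equiv.ofBijective
    (fun a => (⟨⟨a.1.map Subtype.val, fun h => a.2 ((Sym2.isDiag_map Subtype.coe_injective).1 h)⟩,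
      fun v hv => by obtain ⟨u, hu, rfl⟩ := Sym2.mem_map.1 hv; exact u.2⟩ :
        {e : EdgeKn n // ∀ v ∈ e.1, v ∈ Q})) ⟨?_, ?_⟩)).symm
  · intro a b hab
    apply Subtype.ext
    apply Sym2.map.injective Subtype.coe_injective
    exact congrArg (fun t => t.1.1) hab
  · rintro ⟨⟨p, hd⟩, hmem⟩
    revert hd hmem
    induction p using Sym2.ind with
    | _ u v =>
      intro hd hmem
      have hu : u ∈ Q := hmem u (Sym2.mem_mk_left u v)
      have hv : v ∈ Q := hmem v (Sym2.mem_mk_right u v)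
      have huv : u ≠ v := by simpa [Sym2.mk_isDiag_iff] using hd
      refine ⟨⟨s(⟨u, hu⟩, ⟨v, hv⟩), by
        simpa [Sym2.mk_isDiag_iff] using fun h : (⟨u, hu⟩ : ↥Q) = ⟨v, hv⟩ =>
          huv (congrArg Subtype.val h)⟩, ?_⟩
      apply Subtype.ext
      apply Subtype.ext
      simp [Sym2.map_pair_eq]

/-- In the random simple temporal graph `(K_n, λ)`, for `δ ∈ [0,1]` and
`2 ≤ k ≤ n`, the expected number of `δ`-temporal cliques of size `k` equals
`C(n,k) (C(k,2) δ^(C(k,2)-1) (1-δ) + δ^(C(k,2)))`. -/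
theorem stmt5
    {Ω : Type*} [MeasurableSpace Ω] (P : Measure Ω) [IsProbabilityMeasure P]
    (n : ℕ) (hn : 2 ≤ n)
    (lam : EdgeKn n → Ω → ℝ) (hmeas : ∀ e, Measurable (lam e))
    (hindep : iIndepFun lam P)
    (hunif : ∀ e, Measure.map (lam e) P = (volume : Measure ℝ).restrict (Set.Icc 0 1))
    (δ : ℝ) (hδ0 : 0 ≤ δ) (hδ1 : δ ≤ 1) (k : ℕ) (hk2 : 2 ≤ k) (hkn : k ≤ n) :
    ∫ ω, (cliqueCount (fun e => lam e ω) δ k : ℝ) ∂P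
      = (n.choose k : ℝ) *
        ((k.choose 2 : ℝ) * δ ^ (k.choose 2 - 1) * (1 - δ) + δ ^ (k.choose 2)) := by
  classical
  obtain ⟨r, hr⟩ : ∃ r, k.choose 2 = r + 1 :=
    ⟨k.choose 2 - 1, (Nat.succ_pred_eq_of_pos (Nat.choose_pos hk2)).symm⟩
  set c : ℝ := (k.choose 2 : ℝ) * δ ^ (k.choose 2 - 1) * (1 - δ) + δ ^ (k.choose 2) with hcdef
  have hc0 : 0 ≤ c := by
    have : (0:ℝ) ≤ 1 - δ := by linarith
    have h2 : (0:ℝ) ≤ δ ^ (k.choose 2 - 1) := pow_nonneg hδ0 _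
    have h3 : (0:ℝ) ≤ δ ^ (k.choose 2) := pow_nonneg hδ0 _
    have h4 : (0:ℝ) ≤ (k.choose 2 : ℝ) := Nat.cast_nonneg _
    have h5 := mul_nonneg (mul_nonneg h4 h2) this
    linarith
  have hX : Measurable (fun ω (e : EdgeKn n) => lam e ω) := measurable_pi_lambda _ hmeas
  -- the underlying event in the product space
  have hBmeas : ∀ Q : Finset (Fin n), MeasurableSet
      {x : EdgeKn n → ℝ | ∀ e e' : EdgeKn n,
        (∀ v ∈ e.1, v ∈ Q) → (∀ v ∈ e'.1, v ∈ Q) → |x e - x e'| ≤ δ} := by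
    intro Q
    have : {x : EdgeKn n → ℝ | ∀ e e' : EdgeKn n,
        (∀ v ∈ e.1, v ∈ Q) → (∀ v ∈ e'.1, v ∈ Q) → |x e - x e'| ≤ δ}
        = ⋂ (e : EdgeKn n) (e' : EdgeKn n) (_ : ∀ v ∈ e.1, v ∈ Q) (_ : ∀ v ∈ e'.1, v ∈ Q),
          {x : EdgeKn n → ℝ | |x e - x e'| ≤ δ} := by
      ext x; simp [Set.mem_iInter]
    rw [this]
    exact MeasurableSet.iInter fun e => MeasurableSet.iInter fun e' =>
      MeasurableSet.iInter fun _ => MeasurableSet.iInter fun _ =>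
        measurableSet_le ((measurable_pi_apply e).sub (measurable_pi_apply e')).abs
          measurable_const
  have hEQdef : ∀ Q : Finset (Fin n), {ω | IsTemporalClique (fun e => lam e ω) δ Q}
      = (fun ω (e : EdgeKn n) => lam e ω) ⁻¹'
        {x : EdgeKn n → ℝ | ∀ e e' : EdgeKn n,
          (∀ v ∈ e.1, v ∈ Q) → (∀ v ∈ e'.1, v ∈ Q) → |x e - x e'| ≤ δ} := fun Q => rfl
  have hmeasEQ : ∀ Q : Finset (Fin n),
      MeasurableSet {ω | IsTemporalClique (fun e => lam e ω) δ Q} := by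
    intro Q
    rw [hEQdef Q]
    exact hX (hBmeas Q)
  -- the key probability computation
  have key : ∀ Q ∈ (Finset.univ : Finset (Fin n)).powersetCard k,
      P {ω | IsTemporalClique (fun e => lam e ω) δ Q} = ENNReal.ofReal c := by
    intro Q hQ
    have hQcard : Q.card = k := (Finset.mem_powersetCard.1 hQ).2
    have hmap : Measure.map (fun ω (e : EdgeKn n) => lam e ω) P
        = Measure.pi (fun _ : EdgeKn n => mu0) := by
      rw [indep_map_pi lam hmeas hindep]
      exact congrArg Measure.pi (funext fun e => hunif e)
    rw [hEQdef Q, ← Measure.map_apply hX (hBmeas Q), hmap]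
    have MP1 := measurePreserving_piEquivPiSubtypeProd (fun _ : EdgeKn n => mu0)
      (fun e : EdgeKn n => ∀ v ∈ e.1, v ∈ Q)
    set BT : Set ({e : EdgeKn n // ∀ v ∈ e.1, v ∈ Q} → ℝ) :=
      {y | ∀ t t', |y t - y t'| ≤ δ} with hBTdef
    have hBTmeas : MeasurableSet BT := by
      have : BT = ⋂ (t) (t'), {y : {e : EdgeKn n // ∀ v ∈ e.1, v ∈ Q} → ℝ | |y t - y t'| ≤ δ} := by
        ext y; simp [hBTdef, Set.mem_iInter]
      rw [this]
      exact MeasurableSet.iInter fun t => MeasurableSet.iInter fun t' =>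
        measurableSet_le ((measurable_pi_apply t).sub (measurable_pi_apply t')).abs
          measurable_const
    have hsplit : {x : EdgeKn n → ℝ | ∀ e e' : EdgeKn n,
        (∀ v ∈ e.1, v ∈ Q) → (∀ v ∈ e'.1, v ∈ Q) → |x e - x e'| ≤ δ}
        = (MeasurableEquiv.piEquivPiSubtypeProd (fun _ : EdgeKn n => ℝ)
            (fun e : EdgeKn n => ∀ v ∈ e.1, v ∈ Q)) ⁻¹' (BT ×ˢ Set.univ) := by
      ext x
      simp only [Set.mem_preimage, Set.mem_prod, Set.mem_univ, and_true, hBTdef,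
        Set.mem_setOf_eq, MeasurableEquiv.piEquivPiSubtypeProd,
        MeasurableEquiv.coe_mk, Equiv.piEquivPiSubtypeProd_apply, Subtype.forall]
      tauto
    rw [hsplit, MP1.measure_preimage ((hBTmeas.prod MeasurableSet.univ).nullMeasurableSet),
      Measure.prod_prod, measure_univ, mul_one]
    have hcardT : Fintype.card {e : EdgeKn n // ∀ v ∈ e.1, v ∈ Q} = r + 1 := by
      rw [card_edges_in n Q, hQcard, hr]
    have cequiv : Fin (r + 1) ≃ {e : EdgeKn n // ∀ v ∈ e.1, v ∈ Q} :=
      (Fintype.equivFinOfCardEq hcardT).symm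
    have MP2 := measurePreserving_piCongrLeft
      (fun _ : {e : EdgeKn n // ∀ v ∈ e.1, v ∈ Q} => mu0) cequiv
    rw [← MP2.measure_preimage hBTmeas.nullMeasurableSet]
    have happ : ∀ (z : Fin (r+1) → ℝ) t,
        (MeasurableEquiv.piCongrLeft (fun _ => ℝ) cequiv) z t = z (cequiv.symm t) := by
      intro z t
      conv_lhs => rw [← cequiv.apply_symm_apply t]
      rw [MeasurableEquiv.piCongrLeft_apply_apply]
    have hψ : (MeasurableEquiv.piCongrLeft (fun _ => ℝ) cequiv) ⁻¹' BT
        = {z : Fin (r+1) → ℝ | ∀ i j, |z i - z j| ≤ δ} := by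
      ext z
      simp only [Set.mem_preimage, Set.mem_setOf_eq, hBTdef]
      constructor
      · intro h i j
        have := h (cequiv i) (cequiv j)
        rwa [happ, happ, cequiv.symm_apply_apply, cequiv.symm_apply_apply] at this
      · intro h t t'
        rw [happ, happ]
        exact h _ _
    rw [hψ, core r hδ0 hδ1]
    congr 1
    rw [hcdef, hr]
    push_cast [Nat.add_sub_cancel]
    ring
  -- expand the count as a sum of indicators
  have hcount : ∀ ω, (cliqueCount (fun e => lam e ω) δ k : ℝ)
      = ∑ Q ∈ (Finset.univ : Finset (Fin n)).powersetCard k,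
          Set.indicator {ω' | IsTemporalClique (fun e => lam e ω') δ Q} (fun _ => (1:ℝ)) ω := by
    intro ω
    rw [cliqueCount, Finset.card_filter]
    push_cast
    refine Finset.sum_congr rfl fun Q hQ => ?_
    by_cases h : IsTemporalClique (fun e => lam e ω) δ Q <;>
      simp [h, Set.indicator_apply]
  calc ∫ ω, (cliqueCount (fun e => lam e ω) δ k : ℝ) ∂P
      = ∑ Q ∈ (Finset.univ : Finset (Fin n)).powersetCard k,
          ∫ ω, Set.indicator {ω' | IsTemporalClique (fun e => lam e ω') δ Q}
            (fun _ => (1:ℝ)) ω ∂P := by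
        simp_rw [hcount]
        exact integral_finset_sum _ fun Q _ =>
          (integrable_const (1:ℝ)).indicator (hmeasEQ Q)
    _ = ∑ Q ∈ (Finset.univ : Finset (Fin n)).powersetCard k,
          (P {ω | IsTemporalClique (fun e => lam e ω) δ Q}).toReal := by
        refine Finset.sum_congr rfl fun Q _ => ?_
        rw [MeasureTheory.integral_indicator_const (1:ℝ) (hmeasEQ Q), smul_eq_mul, mul_one, measureReal_def]
    _ = ∑ Q ∈ (Finset.univ : Finset (Fin n)).powersetCard k, c := by
        refine Finset.sum_congr rfl fun Q hQ => ?_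
        rw [key Q hQ, ENNReal.toReal_ofReal hc0]
    _ = (n.choose k : ℝ) * c := by
        rw [Finset.sum_const, Finset.card_powersetCard, Finset.card_univ, Fintype.card_fin,
          nsmul_eq_mul]
end

section
/- Let δ ∈ (0,1) and ε ∈ (0,1) be constants, and for each n ≥ 2 let (K_n, λ) be a random simple temporal graph on n vertices. Let k_0(n) = 2 ln n / ln(1/δ). Then the probability that (K_n, λ) contains a δ-temporal clique of size ⌊(1−ε)·k_0(n)⌋ tends to 1 as n → ∞. -/
open MeasureTheory ProbabilityTheory

section Auxiliary
open Finset
open scoped ENNReal NNReal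

namespace Work

instance (n : ℕ) : DecidableEq (EdgeKn n) := by unfold EdgeKn; infer_instance
instance (n : ℕ) : Fintype (EdgeKn n) := by unfold EdgeKn; infer_instance

open scoped Classical in
noncomputable def edgesIn (n : ℕ) (Q : Finset (Fin n)) : Finset (EdgeKn n) :=
  Finset.univ.filter (fun e => ∀ v ∈ e.1, v ∈ Q)

open scoped Classical in
lemma mem_edgesIn {n : ℕ} {Q : Finset (Fin n)} {e : EdgeKn n} :
    e ∈ edgesIn n Q ↔ ∀ v ∈ e.1, v ∈ Q := by simp [edgesIn]

lemma edgesIn_inter {n : ℕ} (Q R : Finset (Fin n)) :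
    edgesIn n Q ∩ edgesIn n R = edgesIn n (Q ∩ R) := by
  ext e
  simp only [Finset.mem_inter, mem_edgesIn]
  exact ⟨fun h v hv => ⟨h.1 v hv, h.2 v hv⟩,
         fun h => ⟨fun v hv => (h v hv).1, fun v hv => (h v hv).2⟩⟩

lemma edgesIn_mono {n : ℕ} {Q R : Finset (Fin n)} (h : Q ⊆ R) :
    edgesIn n Q ⊆ edgesIn n R := fun e he =>
  mem_edgesIn.2 fun v hv => h (mem_edgesIn.1 he v hv)

lemma card_edgesIn {n : ℕ} (Q : Finset (Fin n)) :
    (edgesIn n Q).card = Q.card.choose 2 := by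
  classical
  have h1 : (edgesIn n Q).card = (Q.sym2.filter (fun z => ¬ z.IsDiag)).card := by
    apply Finset.card_bij (fun e _ => e.1)
    · intro e he
      simp only [Finset.mem_filter, Finset.mem_sym2_iff]
      exact ⟨fun a ha => (mem_edgesIn.1 he) a ha, e.2⟩
    · intro a ha b hb hab; exact Subtype.ext hab
    · intro z hz
      simp only [Finset.mem_filter, Finset.mem_sym2_iff] at hz
      exact ⟨⟨z, hz.2⟩, mem_edgesIn.2 hz.1, rfl⟩
  have h2 : (Q.sym2.filter (fun z => Sym2.IsDiag z)).card = Q.card := by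
    have he : Q.sym2.filter (fun z => Sym2.IsDiag z) = Q.image Sym2.diag := by
      ext z
      simp only [Finset.mem_filter, Finset.mem_image, Finset.mem_sym2_iff]
      constructor
      · rintro ⟨h, hd⟩
        induction z using Sym2.ind with
        | _ x y =>
          rw [Sym2.mk_isDiag_iff] at hd
          subst hd
          exact ⟨x, h x (by simp), rfl⟩
      · rintro ⟨a, ha, rfl⟩
        refine ⟨fun v hv => ?_, Sym2.diag_isDiag a⟩
        have : v = a := by simpa [Sym2.diag] using hv
        rwa [this]
    rw [he, Finset.card_image_of_injective _ Sym2.diag_injective]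
  have h3 := Finset.card_filter_add_card_filter_not
    (s := Q.sym2) (p := fun z => Sym2.IsDiag z)
  have h4 : Q.sym2.card = (Q.card + 1).choose 2 := Finset.card_sym2 Q
  have h5 : (Q.card + 1).choose 2 = Q.card.choose 2 + Q.card := by
    rw [Nat.choose_succ_succ]
    simp [Nat.add_comm]
  omega


-- choose ratio lemma
lemma choose_ratio {n k : ℕ} (hk : k ≤ n) :
    ∀ i ≤ k, n.choose (k - i) * (n - k) ^ i ≤ n.choose k * k ^ i := by
  intro i
  induction i with
  | zero => simp
  | succ i ih =>
    intro hik
    have hik' : i ≤ k := Nat.le_of_succ_le hik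
    set j := k - i - 1 with hj
    have hji : k - (i+1) = j := by omega
    have hj1 : j + 1 = k - i := by omega
    have key : n.choose j * (n - k) ≤ n.choose (k - i) * k := by
      have h1 : n.choose j * (n - k) ≤ n.choose j * (n - j) :=
        Nat.mul_le_mul_left _ (by omega)
      have h2 : n.choose j * (n - j) = n.choose (j+1) * (j+1) :=
        (Nat.choose_succ_right_eq n j).symm
      have h3 : n.choose (j+1) * (j+1) ≤ n.choose (j+1) * k :=
        Nat.mul_le_mul_left _ (by omega)
      rw [hj1] at h2 h3
      omega
    calc n.choose (k - (i+1)) * (n - k) ^ (i+1)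
        = (n.choose j * (n - k)) * (n - k) ^ i := by rw [hji, pow_succ]; ring
      _ ≤ (n.choose (k - i) * k) * (n - k) ^ i := Nat.mul_le_mul_right _ key
      _ = k * (n.choose (k - i) * (n - k) ^ i) := by ring
      _ ≤ k * (n.choose k * k ^ i) := Nat.mul_le_mul_left _ (ih hik')
      _ = n.choose k * k ^ (i+1) := by rw [pow_succ]; ring

open scoped Classical in
lemma fiber_card {n k i : ℕ} (Q : Finset (Fin n)) (hQ : Q.card = k) :
    (((Finset.univ : Finset (Fin n)).powersetCard k).filter
        (fun R => (Q ∩ R).card = i)).card ≤ k.choose i * (n - k).choose (k - i) := by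
  classical
  have hmap : ∀ R ∈ ((Finset.univ : Finset (Fin n)).powersetCard k).filter
      (fun R => (Q ∩ R).card = i),
      (Q ∩ R, R \ Q) ∈ (Q.powersetCard i) ×ˢ (Qᶜ.powersetCard (k - i)) := by
    intro R hR
    simp only [Finset.mem_filter, Finset.mem_powersetCard_univ] at hR
    obtain ⟨hRk, hRi⟩ := hR
    simp only [Finset.mem_product, Finset.mem_powersetCard]
    refine ⟨⟨Finset.inter_subset_left, hRi⟩, ?_, ?_⟩
    · intro x hx
      simp only [Finset.mem_sdiff] at hx
      simpa using hx.2
    · have := Finset.card_inter_add_card_sdiff R Q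
      rw [Finset.inter_comm] at this
      omega
  have hinj : ∀ R ∈ ((Finset.univ : Finset (Fin n)).powersetCard k).filter
      (fun R => (Q ∩ R).card = i), ∀ R' ∈ ((Finset.univ : Finset (Fin n)).powersetCard k).filter
      (fun R => (Q ∩ R).card = i), (Q ∩ R, R \ Q) = (Q ∩ R', R' \ Q) → R = R' := by
    intro R _ R' _ h
    obtain ⟨h1, h2⟩ := Prod.mk.injEq .. ▸ h
    have e1 : R = (R ∩ Q) ∪ (R \ Q) := by
      ext x; by_cases hx : x ∈ Q <;> simp [hx] <;> tauto
    have e2 : R' = (R' ∩ Q) ∪ (R' \ Q) := by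
      ext x; by_cases hx : x ∈ Q <;> simp [hx] <;> tauto
    rw [e1, e2, Finset.inter_comm R Q, Finset.inter_comm R' Q, h1, h2]
  calc _ ≤ ((Q.powersetCard i) ×ˢ (Qᶜ.powersetCard (k - i))).card :=
        Finset.card_le_card_of_injOn _ hmap hinj
    _ = k.choose i * (n - k).choose (k - i) := by
        rw [Finset.card_product, Finset.card_powersetCard, Finset.card_powersetCard,
          Finset.card_compl, hQ, Fintype.card_fin]

lemma real_bound {δ ε : ℝ} (hδ0 : 0 < δ) (hδ1 : δ < 1) (hε1 : ε < 1)
    {n K : ℕ} (hKn : K < n)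
    {x : ℝ} (hx : x = (K:ℝ)^2 * Real.exp ((1-ε) * Real.log n) / ((n:ℝ) - K))
    (hx1 : x ≤ 1)
    (hKL : (K:ℝ) * Real.log (1/δ) ≤ 2 * (1-ε) * Real.log n) :
    (n.choose K : ℝ) * (∑ i ∈ Finset.Icc 2 K,
        (K.choose i * (n-K).choose (K-i) : ℝ) * δ ^ (2 * K.choose 2 - i.choose 2))
      ≤ ((K:ℝ) * x^2) * ((n.choose K : ℝ) * δ ^ K.choose 2)^2 := by
  set y : ℝ := Real.exp ((1-ε) * Real.log n) with hy
  have hy0 : 0 < y := Real.exp_pos _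
  have hnK : 0 < (n:ℝ) - K := by
    have : (K:ℝ) < n := by exact_mod_cast hKn
    linarith
  have hx0 : 0 ≤ x := by rw [hx]; positivity
  have hL0 : 0 < Real.log (1/δ) := Real.log_pos (one_lt_one_div hδ0 hδ1)
  have hcast : ((n - K : ℕ) : ℝ) = (n:ℝ) - K := by
    rw [Nat.cast_sub hKn.le]
  -- per-term bound
  have hterm : ∀ i ∈ Finset.Icc 2 K,
      (K.choose i * (n-K).choose (K-i) : ℝ) * δ ^ (2 * K.choose 2 - i.choose 2)
        ≤ (n.choose K : ℝ) * δ ^ (2 * K.choose 2) * x ^ i := by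
    intro i hi
    rw [Finset.mem_Icc] at hi
    obtain ⟨hi2, hiK⟩ := hi
    have hCi : i.choose 2 ≤ 2 * K.choose 2 := by
      have := Nat.choose_le_choose 2 hiK
      omega
    have hsplit : δ ^ (2 * K.choose 2 - i.choose 2)
        = δ ^ (2 * K.choose 2) * (1/δ) ^ (i.choose 2) := by
      rw [pow_sub₀ δ hδ0.ne' hCi, one_div, inv_pow, ← div_eq_mul_inv]
    rw [hsplit]
    have hkey : (K.choose i * (n-K).choose (K-i) : ℝ) * (1/δ) ^ (i.choose 2)
        ≤ (n.choose K : ℝ) * x ^ i := by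
      -- (1/δ)^(i.choose 2) ≤ y^i
      have hb1 : (1/δ : ℝ) ^ (i.choose 2) ≤ y ^ i := by
        have e1 : (1/δ : ℝ) ^ (i.choose 2) = Real.exp ((i.choose 2 : ℝ) * Real.log (1/δ)) := by
          rw [Real.exp_nat_mul, Real.exp_log (by positivity)]
        have e2 : y ^ i = Real.exp ((i:ℝ) * ((1-ε) * Real.log n)) := by
          rw [hy, Real.exp_nat_mul]
        rw [e1, e2]
        apply Real.exp_le_exp.2
        have hc2 : (i.choose 2 : ℝ) = i * (i-1) / 2 := Nat.cast_choose_two (K := ℝ) i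
        have hiK' : (i:ℝ) - 1 ≤ K := by
          have : (i:ℝ) ≤ K := by exact_mod_cast hiK
          linarith
        have hi0 : (0:ℝ) ≤ i := Nat.cast_nonneg i
        calc (i.choose 2 : ℝ) * Real.log (1/δ)
            = (i:ℝ) * (((i:ℝ)-1) * Real.log (1/δ)) / 2 := by rw [hc2]; ring
          _ ≤ (i:ℝ) * ((K:ℝ) * Real.log (1/δ)) / 2 := by
              have : ((i:ℝ)-1) * Real.log (1/δ) ≤ (K:ℝ) * Real.log (1/δ) :=
                mul_le_mul_of_nonneg_right hiK' hL0.le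
              have := mul_le_mul_of_nonneg_left this hi0
              linarith
          _ ≤ (i:ℝ) * (2 * (1-ε) * Real.log n) / 2 := by
              have := mul_le_mul_of_nonneg_left hKL hi0
              linarith
          _ = (i:ℝ) * ((1-ε) * Real.log n) := by ring
      -- choose bounds
      have hb2 : (K.choose i : ℝ) ≤ (K:ℝ) ^ i := by exact_mod_cast Nat.choose_le_pow K i
      have hb3 : ((n-K).choose (K-i) : ℝ) * ((n:ℝ) - K) ^ i ≤ (n.choose K : ℝ) * (K:ℝ) ^ i := by
        have h1 : (n-K).choose (K-i) ≤ n.choose (K-i) :=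
          Nat.choose_le_choose _ (Nat.sub_le n K)
        have h2 := choose_ratio hKn.le i hiK
        have h3 : (n-K).choose (K-i) * (n-K)^i ≤ n.choose K * K^i :=
          le_trans (Nat.mul_le_mul_right _ h1) h2
        calc ((n-K).choose (K-i) : ℝ) * ((n:ℝ) - K) ^ i
            = (((n-K).choose (K-i) * (n-K)^i : ℕ) : ℝ) := by
              push_cast [hcast]; ring
          _ ≤ ((n.choose K * K^i : ℕ) : ℝ) := by exact_mod_cast h3
          _ = (n.choose K : ℝ) * (K:ℝ) ^ i := by push_cast; ring
      have hb3' : ((n-K).choose (K-i) : ℝ) ≤ (n.choose K : ℝ) * (K:ℝ) ^ i / ((n:ℝ) - K) ^ i := by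
        rw [le_div_iff₀ (by positivity)]
        exact hb3
      have hxpow : x ^ i = ((K:ℝ)^2 * y) ^ i / ((n:ℝ) - K) ^ i := by
        rw [hx, div_pow]
      calc (K.choose i * (n-K).choose (K-i) : ℝ) * (1/δ) ^ (i.choose 2)
          ≤ (K.choose i * (n-K).choose (K-i) : ℝ) * y ^ i := by
            have h0 : (0:ℝ) ≤ (K.choose i * (n-K).choose (K-i) : ℝ) := by positivity
            exact mul_le_mul_of_nonneg_left hb1 h0
        _ ≤ ((K:ℝ)^i * ((n.choose K : ℝ) * (K:ℝ) ^ i / ((n:ℝ) - K) ^ i)) * y ^ i := by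
            have : (K.choose i * (n-K).choose (K-i) : ℝ)
                ≤ (K:ℝ)^i * ((n.choose K : ℝ) * (K:ℝ) ^ i / ((n:ℝ) - K) ^ i) := by
              have h0 : (0:ℝ) ≤ ((n-K).choose (K-i) : ℝ) := Nat.cast_nonneg _
              have h0' : (0:ℝ) ≤ (K:ℝ)^i := by positivity
              calc (K.choose i * (n-K).choose (K-i) : ℝ)
                  ≤ (K:ℝ)^i * ((n-K).choose (K-i) : ℝ) :=
                    mul_le_mul_of_nonneg_right hb2 h0
                _ ≤ (K:ℝ)^i * ((n.choose K : ℝ) * (K:ℝ) ^ i / ((n:ℝ) - K) ^ i) :=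
                    mul_le_mul_of_nonneg_left hb3' h0'
            exact mul_le_mul_of_nonneg_right this (by positivity)
        _ = (n.choose K : ℝ) * (((K:ℝ)^2 * y) ^ i / ((n:ℝ) - K) ^ i) := by
            rw [mul_pow]
            field_simp
            ring
        _ = (n.choose K : ℝ) * x ^ i := by rw [hxpow]
    calc (K.choose i * (n-K).choose (K-i) : ℝ)
          * (δ ^ (2 * K.choose 2) * (1/δ) ^ (i.choose 2))
        = ((K.choose i * (n-K).choose (K-i) : ℝ) * (1/δ) ^ (i.choose 2))
            * δ ^ (2 * K.choose 2) := by ring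
      _ ≤ ((n.choose K : ℝ) * x ^ i) * δ ^ (2 * K.choose 2) :=
          mul_le_mul_of_nonneg_right hkey (by positivity)
      _ = (n.choose K : ℝ) * δ ^ (2 * K.choose 2) * x ^ i := by ring
  -- sum it up
  have hsum : ∑ i ∈ Finset.Icc 2 K,
      (K.choose i * (n-K).choose (K-i) : ℝ) * δ ^ (2 * K.choose 2 - i.choose 2)
      ≤ (K:ℝ) * x^2 * ((n.choose K : ℝ) * δ ^ (2 * K.choose 2)) := by
    calc ∑ i ∈ Finset.Icc 2 K,
          (K.choose i * (n-K).choose (K-i) : ℝ) * δ ^ (2 * K.choose 2 - i.choose 2)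
        ≤ ∑ i ∈ Finset.Icc 2 K, (n.choose K : ℝ) * δ ^ (2 * K.choose 2) * x ^ i :=
          Finset.sum_le_sum hterm
      _ ≤ ∑ _i ∈ Finset.Icc 2 K, (n.choose K : ℝ) * δ ^ (2 * K.choose 2) * x ^ 2 := by
          refine Finset.sum_le_sum (fun i hi => ?_)
          rw [Finset.mem_Icc] at hi
          have := pow_le_pow_of_le_one hx0 hx1 hi.1
          have h0 : (0:ℝ) ≤ (n.choose K : ℝ) * δ ^ (2 * K.choose 2) := by positivity
          exact mul_le_mul_of_nonneg_left this h0
      _ = ((Finset.Icc 2 K).card : ℝ) * ((n.choose K : ℝ) * δ ^ (2 * K.choose 2) * x ^ 2) := by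
          rw [Finset.sum_const, nsmul_eq_mul]
      _ ≤ (K:ℝ) * ((n.choose K : ℝ) * δ ^ (2 * K.choose 2) * x ^ 2) := by
          have hcard : ((Finset.Icc 2 K).card : ℝ) ≤ (K:ℝ) := by
            have h := Nat.card_Icc 2 K
            have : (Finset.Icc 2 K).card ≤ K := by omega
            exact_mod_cast this
          have h0 : (0:ℝ) ≤ (n.choose K : ℝ) * δ ^ (2 * K.choose 2) * x ^ 2 := by positivity
          exact mul_le_mul_of_nonneg_right hcard h0
      _ = (K:ℝ) * x^2 * ((n.choose K : ℝ) * δ ^ (2 * K.choose 2)) := by ring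
  calc (n.choose K : ℝ) * (∑ i ∈ Finset.Icc 2 K,
        (K.choose i * (n-K).choose (K-i) : ℝ) * δ ^ (2 * K.choose 2 - i.choose 2))
      ≤ (n.choose K : ℝ) * ((K:ℝ) * x^2 * ((n.choose K : ℝ) * δ ^ (2 * K.choose 2))) :=
        mul_le_mul_of_nonneg_left hsum (Nat.cast_nonneg _)
    _ = ((K:ℝ) * x^2) * ((n.choose K : ℝ) * δ ^ K.choose 2)^2 := by
        rw [mul_pow, ← pow_mul, mul_comm (K.choose 2) 2]
        ring

section
variable {Ω : Type*} [MeasurableSpace Ω] (P : Measure Ω) [IsProbabilityMeasure P]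
variable {n : ℕ} (lam : EdgeKn n → Ω → ℝ) {δ : ℝ}

lemma meas_biInter_edges (hδ0 : 0 < δ) (hδ1 : δ ≤ 1)
    (hmeas : ∀ e, Measurable (lam e))
    (hindep : iIndepFun lam P)
    (hunif : ∀ e, Measure.map (lam e) P = (volume : Measure ℝ).restrict (Set.Icc 0 1))
    (S : Finset (EdgeKn n)) :
    P (⋂ e ∈ S, lam e ⁻¹' Set.Icc 0 δ) = ENNReal.ofReal δ ^ S.card := by
  rw [hindep.meas_biInter (fun e _ => ⟨Set.Icc 0 δ, measurableSet_Icc, rfl⟩)]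
  have h : ∀ e : EdgeKn n, P (lam e ⁻¹' Set.Icc 0 δ) = ENNReal.ofReal δ := by
    intro e
    rw [← Measure.map_apply (hmeas e) measurableSet_Icc, hunif e,
      Measure.restrict_apply measurableSet_Icc, Set.Icc_inter_Icc]
    rw [Real.volume_Icc]
    congr 1
    rw [max_self, min_eq_left hδ1]
    ring
  simp [h]


open scoped Classical in
lemma second_moment_core (hδ0 : 0 < δ) (hδ1 : δ ≤ 1)
    (hmeas : ∀ e, Measurable (lam e))
    (hindep : iIndepFun lam P)
    (hunif : ∀ e, Measure.map (lam e) P = (volume : Measure ℝ).restrict (Set.Icc 0 1))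
    (k : ℕ) (hkn : k ≤ n) (sb : ℝ) (hsb : 0 ≤ sb)
    (hβ : (n.choose k : ℝ) *
        (∑ i ∈ Finset.Icc 2 k, (k.choose i * (n-k).choose (k-i) : ℝ) *
          δ ^ (2 * k.choose 2 - i.choose 2))
      ≤ sb * ((n.choose k : ℝ) * δ ^ k.choose 2) ^ 2) :
    (ENNReal.ofReal (1 + sb))⁻¹ ≤
      P {ω | ∃ Q : Finset (Fin n), Q.card = k ∧
        IsTemporalClique (fun e => lam e ω) δ Q} := by
  classical
  set d : ℝ≥0∞ := ENNReal.ofReal δ with hd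
  set C : ℕ := k.choose 2 with hC
  set 𝒬 : Finset (Finset (Fin n)) := (Finset.univ : Finset (Fin n)).powersetCard k with h𝒬
  set A : Finset (Fin n) → Set Ω := fun Q => ⋂ e ∈ edgesIn n Q, lam e ⁻¹' Set.Icc 0 δ with hA
  have hAmeas : ∀ Q, MeasurableSet (A Q) := fun Q =>
    MeasurableSet.biInter (Finset.countable_toSet _) (fun e _ => (hmeas e) measurableSet_Icc)
  have hcard : ∀ Q ∈ 𝒬, Q.card = k := fun Q hQ => (Finset.mem_powersetCard_univ.1 hQ)
  have hPA : ∀ Q ∈ 𝒬, P (A Q) = d ^ C := by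
    intro Q hQ
    rw [hA, meas_biInter_edges P lam hδ0 hδ1 hmeas hindep hunif, card_edgesIn, hcard Q hQ]
  have hPAA : ∀ Q ∈ 𝒬, ∀ R ∈ 𝒬,
      P (A Q ∩ A R) = d ^ (2 * C - (Q ∩ R).card.choose 2) := by
    intro Q hQ R hR
    have hU : A Q ∩ A R = ⋂ e ∈ edgesIn n Q ∪ edgesIn n R, lam e ⁻¹' Set.Icc 0 δ := by
      ext ω
      simp only [hA, Set.mem_inter_iff, Set.mem_iInter, Finset.mem_union]
      constructor
      · rintro ⟨h1, h2⟩ e he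
        rcases he with he | he
        · exact h1 e he
        · exact h2 e he
      · intro h
        exact ⟨fun e he => h e (Or.inl he), fun e he => h e (Or.inr he)⟩
    rw [hU, meas_biInter_edges P lam hδ0 hδ1 hmeas hindep hunif]
    congr 1
    have h1 := Finset.card_union_add_card_inter (edgesIn n Q) (edgesIn n R)
    rw [edgesIn_inter, card_edgesIn, card_edgesIn, card_edgesIn, hcard Q hQ, hcard R hR] at h1
    have h2 : (Q ∩ R).card.choose 2 ≤ k.choose 2 := by
      apply Nat.choose_le_choose
      rw [← hcard Q hQ]
      exact Finset.card_le_card Finset.inter_subset_left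
    omega
  -- the counting function
  set f : Ω → ℝ≥0∞ := fun ω => ∑ Q ∈ 𝒬, (A Q).indicator 1 ω with hf
  have hfmeas : Measurable f := by
    apply Finset.measurable_sum
    intro Q _
    exact measurable_one.indicator (hAmeas Q)
  set c : ℝ≥0∞ := (n.choose k : ℝ≥0∞) with hc
  have hQcard : (𝒬.card : ℝ≥0∞) = c := by
    rw [h𝒬, Finset.card_powersetCard, Finset.card_univ, Fintype.card_fin]
  have hE : ∫⁻ ω, f ω ∂P = c * d ^ C := by
    rw [hf]
    simp only
    rw [lintegral_finset_sum _ (fun Q _ => measurable_one.indicator (hAmeas Q))]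
    rw [Finset.sum_congr rfl (fun Q hQ => by rw [lintegral_indicator_one (hAmeas Q), hPA Q hQ])]
    rw [Finset.sum_const, nsmul_eq_mul, hQcard]
  have hE2 : ∫⁻ ω, f ω ^ 2 ∂P = ∑ Q ∈ 𝒬, ∑ R ∈ 𝒬, P (A Q ∩ A R) := by
    have hsq : ∀ ω, f ω ^ 2 = ∑ Q ∈ 𝒬, ∑ R ∈ 𝒬, (A Q ∩ A R).indicator 1 ω := by
      intro ω
      rw [hf, sq]
      simp only
      rw [Finset.sum_mul_sum]
      refine Finset.sum_congr rfl (fun Q _ => Finset.sum_congr rfl (fun R _ => ?_))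
      rw [Set.inter_indicator_one]
      rfl
    calc ∫⁻ ω, f ω ^ 2 ∂P
        = ∫⁻ ω, ∑ Q ∈ 𝒬, ∑ R ∈ 𝒬, (A Q ∩ A R).indicator 1 ω ∂P :=
          lintegral_congr hsq
      _ = ∑ Q ∈ 𝒬, ∑ R ∈ 𝒬, P (A Q ∩ A R) := by
          rw [lintegral_finset_sum _ (fun Q _ => Finset.measurable_sum _
            (fun R _ => measurable_one.indicator ((hAmeas Q).inter (hAmeas R))))]
          refine Finset.sum_congr rfl (fun Q _ => ?_)
          rw [lintegral_finset_sum _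
            (fun R _ => measurable_one.indicator ((hAmeas Q).inter (hAmeas R)))]
          exact Finset.sum_congr rfl (fun R _ => lintegral_indicator_one ((hAmeas Q).inter (hAmeas R)))
  -- Cauchy-Schwarz
  have hNmeas : MeasurableSet {ω | f ω ≠ 0} := by
    have : {ω | f ω ≠ 0} = (f ⁻¹' {0})ᶜ := by ext ω; simp
    rw [this]
    exact (hfmeas (measurableSet_singleton 0)).compl
  set m : ℝ≥0∞ := P {ω | f ω ≠ 0} with hm
  have hCS : (∫⁻ ω, f ω ∂P) ^ 2 ≤ (∫⁻ ω, f ω ^ 2 ∂P) * m := by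
    set g : Ω → ℝ≥0∞ := ({ω | f ω ≠ 0}).indicator 1 with hg
    have hgmeas : Measurable g := measurable_one.indicator hNmeas
    have hconj : Real.HolderConjugate 2 2 := Real.HolderConjugate.two_two
    have hH := ENNReal.lintegral_mul_le_Lp_mul_Lq P hconj hfmeas.aemeasurable hgmeas.aemeasurable
    have hrp : ∀ x : ℝ≥0∞, x ^ (2:ℝ) = x ^ (2:ℕ) := fun x => by
      rw [← ENNReal.rpow_natCast]; norm_num
    have hfg : ∫⁻ ω, (f * g) ω ∂P = ∫⁻ ω, f ω ∂P := by
      refine lintegral_congr (fun ω => ?_)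
      by_cases h : f ω = 0 <;> simp [hg, h]
    have hgint : ∫⁻ ω, g ω ^ (2:ℝ) ∂P = m := by
      have : ∀ ω, g ω ^ (2:ℝ) = g ω := by
        intro ω
        by_cases h : f ω = 0 <;> simp [hg, h, ENNReal.rpow_two]
      rw [lintegral_congr this, hg, lintegral_indicator_one hNmeas]
    rw [hfg, hgint] at hH
    have hfint : ∫⁻ ω, f ω ^ (2:ℝ) ∂P = ∫⁻ ω, f ω ^ 2 ∂P :=
      lintegral_congr (fun ω => hrp (f ω))
    rw [hfint] at hH
    calc (∫⁻ ω, f ω ∂P) ^ 2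
        ≤ ((∫⁻ ω, f ω ^ 2 ∂P) ^ (1/2 : ℝ) * m ^ (1/2 : ℝ)) ^ 2 := by
          exact pow_le_pow_left' hH 2
      _ = (∫⁻ ω, f ω ^ 2 ∂P) * m := by
          rw [mul_pow, ← hrp, ← hrp, ← ENNReal.rpow_mul, ← ENNReal.rpow_mul]
          norm_num
  -- bound the second moment
  set Bβ : ℝ≥0∞ := ∑ i ∈ Finset.Icc 2 k,
      ((k.choose i * (n-k).choose (k-i) : ℕ) : ℝ≥0∞) * d ^ (2*C - i.choose 2) with hBβ
  have hinner : ∀ Q ∈ 𝒬, ∑ R ∈ 𝒬, P (A Q ∩ A R) ≤ c * d ^ (2*C) + Bβ := by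
    intro Q hQ
    have hsplit := Finset.sum_filter_add_sum_filter_not 𝒬
      (fun R => (Q ∩ R).card < 2) (fun R => P (A Q ∩ A R))
    rw [← hsplit]
    gcongr
    · -- small intersections
      calc ∑ R ∈ 𝒬.filter (fun R => (Q ∩ R).card < 2), P (A Q ∩ A R)
          ≤ ∑ R ∈ 𝒬.filter (fun R => (Q ∩ R).card < 2), d ^ (2*C) := by
            refine Finset.sum_le_sum (fun R hR => ?_)
            rw [Finset.mem_filter] at hR
            rw [hPAA Q hQ R hR.1, Nat.choose_eq_zero_of_lt hR.2, Nat.sub_zero]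
        _ = ((𝒬.filter (fun R => (Q ∩ R).card < 2)).card : ℝ≥0∞) * d ^ (2*C) := by
            rw [Finset.sum_const, nsmul_eq_mul]
        _ ≤ c * d ^ (2*C) := by
            rw [← hQcard]
            have hle : (𝒬.filter (fun R => (Q ∩ R).card < 2)).card ≤ 𝒬.card :=
              Finset.card_le_card (Finset.filter_subset _ _)
            gcongr
    · -- large intersections
      have hmaps : ∀ R ∈ 𝒬.filter (fun R => ¬ (Q ∩ R).card < 2),
          (Q ∩ R).card ∈ Finset.Icc 2 k := by
        intro R hR
        rw [Finset.mem_filter] at hR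
        rw [Finset.mem_Icc]
        refine ⟨by omega, ?_⟩
        calc (Q ∩ R).card ≤ Q.card := Finset.card_le_card Finset.inter_subset_left
          _ = k := hcard Q hQ
      rw [← Finset.sum_fiberwise_of_maps_to hmaps (fun R => P (A Q ∩ A R))]
      rw [hBβ]
      refine Finset.sum_le_sum (fun i hi => ?_)
      calc ∑ R ∈ (𝒬.filter (fun R => ¬ (Q ∩ R).card < 2)).filter (fun R => (Q ∩ R).card = i),
              P (A Q ∩ A R)
          ≤ ∑ R ∈ (𝒬.filter (fun R => ¬ (Q ∩ R).card < 2)).filter (fun R => (Q ∩ R).card = i),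
              d ^ (2*C - i.choose 2) := by
            refine Finset.sum_le_sum (fun R hR => ?_)
            simp only [Finset.mem_filter] at hR
            rw [hPAA Q hQ R hR.1.1, hR.2]
        _ = (((𝒬.filter (fun R => ¬ (Q ∩ R).card < 2)).filter
              (fun R => (Q ∩ R).card = i)).card : ℝ≥0∞) * d ^ (2*C - i.choose 2) := by
            rw [Finset.sum_const, nsmul_eq_mul]
        _ ≤ ((k.choose i * (n-k).choose (k-i) : ℕ) : ℝ≥0∞) * d ^ (2*C - i.choose 2) := by
            gcongr
            have hsubs : (𝒬.filter (fun R => ¬ (Q ∩ R).card < 2)).filter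
                (fun R => (Q ∩ R).card = i) ⊆ 𝒬.filter (fun R => (Q ∩ R).card = i) := by
              intro R hR
              simp only [Finset.mem_filter] at hR ⊢
              exact ⟨hR.1.1, hR.2⟩
            have := (Finset.card_le_card hsubs).trans (fiber_card Q (hcard Q hQ))
            exact_mod_cast this
  have hE2le : ∫⁻ ω, f ω ^ 2 ∂P ≤ c * (c * d ^ (2*C) + Bβ) := by
    rw [hE2]
    calc ∑ Q ∈ 𝒬, ∑ R ∈ 𝒬, P (A Q ∩ A R)
        ≤ ∑ _Q ∈ 𝒬, (c * d ^ (2*C) + Bβ) := Finset.sum_le_sum hinner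
      _ = (𝒬.card : ℝ≥0∞) * (c * d ^ (2*C) + Bβ) := by rw [Finset.sum_const, nsmul_eq_mul]
      _ = c * (c * d ^ (2*C) + Bβ) := by rw [hQcard]
  -- basic non-degeneracy
  have hc0 : c ≠ 0 := Nat.cast_ne_zero.2 (Nat.choose_pos hkn).ne'
  have hctop : c ≠ ⊤ := ENNReal.natCast_ne_top _
  have hd0 : d ≠ 0 := (ENNReal.ofReal_pos.2 hδ0).ne'
  have hE20 : (c * d^C)^2 ≠ 0 := pow_ne_zero _ (mul_ne_zero hc0 (pow_ne_zero _ hd0))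
  have hE2top : (c * d^C)^2 ≠ ⊤ :=
    ENNReal.pow_ne_top (ENNReal.mul_ne_top hctop (ENNReal.pow_ne_top ENNReal.ofReal_ne_top))
  have hdd : d ^ (2*C) = (d^C)^2 := by rw [mul_comm, pow_mul]
  -- relate to the real hypothesis
  have hdpow : ∀ mm : ℕ, d ^ mm = ENNReal.ofReal (δ ^ mm) := fun mm => by
    rw [hd, ← ENNReal.ofReal_pow hδ0.le]
  have hcoe : c = ENNReal.ofReal (n.choose k : ℝ) := by rw [hc, ENNReal.ofReal_natCast]
  have hsq : (c * d^C)^2 = ENNReal.ofReal (((n.choose k : ℝ) * δ ^ k.choose 2)^2) := by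
    rw [hcoe, hdpow, ← ENNReal.ofReal_mul (Nat.cast_nonneg _),
      ← ENNReal.ofReal_pow (by positivity), hC]
  have hBβr : c * Bβ ≤ ENNReal.ofReal sb * (c * d^C)^2 := by
    have h1 : c * Bβ = ENNReal.ofReal ((n.choose k : ℝ) *
        ∑ i ∈ Finset.Icc 2 k, (k.choose i * (n-k).choose (k-i) : ℝ) *
          δ ^ (2 * k.choose 2 - i.choose 2)) := by
      rw [ENNReal.ofReal_mul (Nat.cast_nonneg _), ← hcoe]
      congr 1
      rw [hBβ, ENNReal.ofReal_sum_of_nonneg (fun i _ => by positivity)]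
      refine Finset.sum_congr rfl (fun i _ => ?_)
      rw [ENNReal.ofReal_mul (by positivity), hdpow, hC]
      congr 1
      rw [← ENNReal.ofReal_natCast]
      congr 1
      push_cast
      ring
    rw [h1, hsq, ← ENNReal.ofReal_mul hsb]
    exact ENNReal.ofReal_le_ofReal hβ
  set m : ℝ≥0∞ := P {ω | f ω ≠ 0} with hm
  have hmain : (c * d^C)^2 * 1 ≤ (c * d^C)^2 * (ENNReal.ofReal (1+sb) * m) := by
    rw [mul_one]
    calc (c * d^C)^2 = (∫⁻ ω, f ω ∂P)^2 := by rw [hE]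
      _ ≤ (∫⁻ ω, f ω ^ 2 ∂P) * m := hCS
      _ ≤ (c * (c * d^(2*C) + Bβ)) * m := mul_le_mul_left hE2le m
      _ = ((c*d^C)^2 + c * Bβ) * m := by rw [hdd]; ring
      _ ≤ ((c*d^C)^2 + ENNReal.ofReal sb * (c*d^C)^2) * m := by gcongr
      _ = (c*d^C)^2 * ((1 + ENNReal.ofReal sb) * m) := by ring
      _ = (c*d^C)^2 * (ENNReal.ofReal (1+sb) * m) := by
          rw [ENNReal.ofReal_add zero_le_one hsb, ENNReal.ofReal_one]
  have hone : 1 ≤ ENNReal.ofReal (1+sb) * m :=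
    (ENNReal.mul_le_mul_iff_right hE20 hE2top).1 hmain
  have hq0 : ENNReal.ofReal (1+sb) ≠ 0 := (ENNReal.ofReal_pos.2 (by linarith)).ne'
  have hinv : (ENNReal.ofReal (1+sb))⁻¹ ≤ m := by
    calc (ENNReal.ofReal (1+sb))⁻¹ = (ENNReal.ofReal (1+sb))⁻¹ * 1 := (mul_one _).symm
      _ ≤ (ENNReal.ofReal (1+sb))⁻¹ * (ENNReal.ofReal (1+sb) * m) := mul_le_mul_right hone _
      _ = m := by rw [← mul_assoc, ENNReal.inv_mul_cancel hq0 ENNReal.ofReal_ne_top, one_mul]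
  refine hinv.trans (measure_mono ?_)
  intro ω hω
  simp only [Set.mem_setOf_eq] at hω ⊢
  have hex : ∃ Q ∈ 𝒬, (A Q).indicator (1 : Ω → ℝ≥0∞) ω ≠ 0 := by
    by_contra h
    push_neg at h
    exact hω (Finset.sum_eq_zero h)
  obtain ⟨Q, hQ𝒬, hQne⟩ := hex
  have hωA : ω ∈ A Q := by
    by_contra h
    simp [Set.indicator_of_notMem h] at hQne
  refine ⟨Q, hcard Q hQ𝒬, ?_⟩
  intro e e' he he'
  simp only [hA, Set.mem_iInter] at hωA
  have h1 := hωA e (mem_edgesIn.2 he)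
  have h2 := hωA e' (mem_edgesIn.2 he')
  simp only [Set.mem_preimage, Set.mem_Icc] at h1 h2
  rw [abs_le]
  constructor <;> [linarith [h1.1, h2.2]; linarith [h1.2, h2.1]]
end

lemma an_lemma (a : ℕ) {b : ℝ} (hb : 0 < b) :
    Filter.Tendsto (fun n : ℕ => Real.log n ^ a / (n:ℝ) ^ b) Filter.atTop (nhds 0) := by
  have h := (isLittleO_log_rpow_rpow_atTop (a:ℝ) hb).tendsto_div_nhds_zero
  have h2 := h.comp (tendsto_natCast_atTop_atTop (R := ℝ))
  refine h2.congr (fun n => ?_)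
  simp [Function.comp, Real.rpow_natCast]


end Work

end Auxiliary

open Filter Work in
/-- For constants `δ ∈ (0,1)` and `ε ∈ (0,1)`, with `k₀(n) = 2 ln n / ln(1/δ)`,
the probability that `(K_n, λ)` contains a `δ`-temporal clique of size
`⌊(1-ε) k₀(n)⌋` tends to `1` as `n → ∞`. -/
theorem stmt15
    (δ : ℝ) (hδ0 : 0 < δ) (hδ1 : δ < 1) (ε : ℝ) (hε0 : 0 < ε) (hε1 : ε < 1)
    {Ω : ℕ → Type*} [∀ n, MeasurableSpace (Ω n)]
    (P : ∀ n, Measure (Ω n)) (hP : ∀ n, IsProbabilityMeasure (P n))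
    (lam : ∀ n, EdgeKn n → Ω n → ℝ) (hmeas : ∀ n e, Measurable (lam n e))
    (hindep : ∀ n, iIndepFun (lam n) (P n))
    (hunif : ∀ n e, Measure.map (lam n e) (P n) = (volume : Measure ℝ).restrict (Set.Icc 0 1)) :
    Tendsto
      (fun n =>
        P n {ω | ∃ Q : Finset (Fin n),
          Q.card = ⌊(1 - ε) * (2 * Real.log n / Real.log (1/δ))⌋₊ ∧
          IsTemporalClique (fun e => lam n e ω) δ Q})
      atTop (nhds 1) := by
  classical
  set L : ℝ := Real.log (1/δ) with hL
  have hL0 : 0 < L := Real.log_pos (one_lt_one_div hδ0 hδ1)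
  set K : ℕ → ℕ := fun n => ⌊(1 - ε) * (2 * Real.log n / L)⌋₊ with hK
  set c₀ : ℝ := 2 / L with hc₀
  have hc₀0 : 0 < c₀ := by positivity
  set x : ℕ → ℝ := fun n => (K n : ℝ)^2 * Real.exp ((1-ε) * Real.log n) / ((n:ℝ) - K n) with hxdef
  set sb : ℕ → ℝ := fun n => (K n : ℝ) * (x n)^2 with hsbdef
  -- floor bounds
  have hKle : ∀ n : ℕ, 1 ≤ n → (K n : ℝ) ≤ (1 - ε) * (2 * Real.log n / L) := by
    intro n hn
    apply Nat.floor_le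
    have h1 : 0 ≤ Real.log n := Real.log_natCast_nonneg n
    have h2 : (0:ℝ) ≤ 1 - ε := by linarith
    have h3 : 0 ≤ 2 * Real.log n / L := by positivity
    exact mul_nonneg h2 h3
  have hKL : ∀ n : ℕ, 1 ≤ n → (K n : ℝ) * L ≤ 2 * (1 - ε) * Real.log n := by
    intro n hn
    have h := hKle n hn
    have h2 : (1 - ε) * (2 * Real.log n / L) * L = 2 * (1-ε) * Real.log n := by
      field_simp
    calc (K n : ℝ) * L ≤ (1 - ε) * (2 * Real.log n / L) * L :=
          mul_le_mul_of_nonneg_right h hL0.le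
      _ = 2 * (1 - ε) * Real.log n := h2
  have hKc₀ : ∀ n : ℕ, 1 ≤ n → (K n : ℝ) ≤ c₀ * Real.log n := by
    intro n hn
    refine (hKle n hn).trans ?_
    have hlogn : 0 ≤ Real.log n := Real.log_natCast_nonneg n
    have heq : c₀ * Real.log n = 2 * Real.log n / L := by rw [hc₀]; ring
    rw [heq]
    have hA : 0 ≤ 2 * Real.log n / L := by positivity
    calc (1 - ε) * (2 * Real.log n / L) ≤ 1 * (2 * Real.log n / L) :=
          mul_le_mul_of_nonneg_right (by linarith) hA
      _ = 2 * Real.log n / L := by ring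
  -- eventually K n ≤ n / 2
  have hhalf : ∀ᶠ n : ℕ in atTop, (K n : ℝ) ≤ (n:ℝ) / 2 := by
    have h1 : ∀ᶠ n : ℕ in atTop, Real.log n ^ 1 / (n:ℝ) ^ (1:ℝ) < 1 / (2 * c₀) :=
      (an_lemma 1 one_pos).eventually_lt_const (by positivity)
    filter_upwards [h1, eventually_ge_atTop 1] with n hn h1n
    have hn0 : (0:ℝ) < n := by exact_mod_cast h1n
    have : Real.log n / n < 1 / (2 * c₀) := by
      simpa [Real.rpow_one] using hn
    have hlog : Real.log n < n / (2 * c₀) := by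
      have h' := (div_lt_iff₀ hn0).1 this
      calc Real.log n < 1/(2*c₀)*n := h'
        _ = n/(2*c₀) := by ring
    calc (K n : ℝ) ≤ c₀ * Real.log n := hKc₀ n h1n
      _ ≤ c₀ * (n / (2 * c₀)) := mul_le_mul_of_nonneg_left hlog.le hc₀0.le
      _ = n / 2 := by field_simp
  -- eventual bound on x
  have hxbound : ∀ᶠ n : ℕ in atTop,
      x n ≤ 2 * c₀^2 * (Real.log n ^ 2 / (n:ℝ) ^ ε) := by
    filter_upwards [hhalf, eventually_ge_atTop 1] with n hn h1n
    have hn0 : (0:ℝ) < n := by exact_mod_cast h1n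
    have hnK : (n:ℝ)/2 ≤ (n:ℝ) - K n := by linarith
    have hy : Real.exp ((1-ε) * Real.log n) = (n:ℝ) ^ ((1:ℝ) - ε) := by
      rw [Real.rpow_def_of_pos hn0, mul_comm]
    have hlogn : 0 ≤ Real.log n := Real.log_natCast_nonneg n
    have hKn2 : (K n : ℝ)^2 ≤ (c₀ * Real.log n)^2 := by
      apply pow_le_pow_left₀ (Nat.cast_nonneg _) (hKc₀ n h1n)
    have hnum : (K n : ℝ)^2 * Real.exp ((1-ε) * Real.log n)
        ≤ (c₀ * Real.log n)^2 * (n:ℝ) ^ ((1:ℝ) - ε) := by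
      rw [hy]
      apply mul_le_mul_of_nonneg_right hKn2 (Real.rpow_nonneg hn0.le _)
    calc x n ≤ ((c₀ * Real.log n)^2 * (n:ℝ) ^ ((1:ℝ) - ε)) / ((n:ℝ)/2) := by
          rw [hxdef]
          apply div_le_div₀ (by positivity) hnum (by positivity) hnK
      _ = 2 * c₀^2 * (Real.log n ^ 2 * ((n:ℝ) ^ ((1:ℝ) - ε) / n)) := by
          field_simp
      _ = 2 * c₀^2 * (Real.log n ^ 2 / (n:ℝ) ^ ε) := by
          congr 1
          rw [Real.rpow_sub hn0, Real.rpow_one]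
          field_simp
  have hx0 : ∀ᶠ n : ℕ in atTop, 0 ≤ x n := by
    filter_upwards [hhalf, eventually_ge_atTop 1] with n hn h1n
    have hn0 : (0:ℝ) < n := by exact_mod_cast h1n
    have hnK : (0:ℝ) < (n:ℝ) - K n := by linarith
    rw [hxdef]
    positivity
  have hxtend : Tendsto x atTop (nhds 0) := by
    apply squeeze_zero' hx0 hxbound
    have := (an_lemma 2 hε0).const_mul (2 * c₀^2)
    simpa using this
  have hx1 : ∀ᶠ n : ℕ in atTop, x n ≤ 1 :=
    (hxtend.eventually_lt_const one_pos).mono (fun n hn => hn.le)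
  -- sb → 0
  have hsb0 : ∀ᶠ n : ℕ in atTop, 0 ≤ sb n := by
    filter_upwards [hx0] with n hn
    rw [hsbdef]
    positivity
  have hsbtend : Tendsto sb atTop (nhds 0) := by
    have hbb : ∀ᶠ n : ℕ in atTop,
        sb n ≤ (4 * c₀^5) * (Real.log n ^ 5 / (n:ℝ) ^ (2*ε)) := by
      filter_upwards [hxbound, hx0, eventually_ge_atTop 1] with n hxb hx0n h1n
      have hn0 : (0:ℝ) < n := by exact_mod_cast h1n
      have hlogn : 0 ≤ Real.log n := Real.log_natCast_nonneg n
      have h2 : (x n)^2 ≤ (2 * c₀^2 * (Real.log n ^ 2 / (n:ℝ) ^ ε))^2 :=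
        pow_le_pow_left₀ hx0n hxb 2
      have hre : ((n:ℝ) ^ ε)^2 = (n:ℝ) ^ (2*ε) := by
        rw [← Real.rpow_natCast ((n:ℝ) ^ ε) 2, ← Real.rpow_mul hn0.le]
        norm_num
        rw [mul_comm]
      calc sb n ≤ (c₀ * Real.log n) * (x n)^2 := by
            rw [hsbdef]
            apply mul_le_mul_of_nonneg_right (hKc₀ n h1n) (by positivity)
        _ ≤ (c₀ * Real.log n) * (2 * c₀^2 * (Real.log n ^ 2 / (n:ℝ) ^ ε))^2 := by
            apply mul_le_mul_of_nonneg_left h2 (by positivity)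
        _ = (4 * c₀^5) * (Real.log n ^ 5 / (n:ℝ) ^ (2*ε)) := by
            have hsq : (2 * c₀^2 * (Real.log n ^ 2 / (n:ℝ) ^ ε))^2
                = 4 * c₀^4 * (Real.log n ^ 4 / ((n:ℝ) ^ ε)^2) := by
              field_simp
              ring
            rw [hsq, hre]
            have hne : (n:ℝ) ^ (2*ε) ≠ 0 := by positivity
            field_simp
    apply squeeze_zero' hsb0 hbb
    have := (an_lemma 5 (by positivity : (0:ℝ) < 2*ε)).const_mul (4 * c₀^5)
    simpa using this
  -- conclude
  have hlower : ∀ᶠ n : ℕ in atTop,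
      (ENNReal.ofReal (1 + sb n))⁻¹ ≤
        P n {ω | ∃ Q : Finset (Fin n),
          Q.card = ⌊(1 - ε) * (2 * Real.log n / Real.log (1/δ))⌋₊ ∧
          IsTemporalClique (fun e => lam n e ω) δ Q} := by
    filter_upwards [hhalf, hx1, hx0, hsb0, eventually_ge_atTop 2] with n hn hx1n hx0n hsb0n h2n
    have h1n : 1 ≤ n := by omega
    have hn0 : (0:ℝ) < n := by exact_mod_cast h1n
    have hKn : K n < n := by
      have h2 : (K n : ℝ) ≤ n/2 := hn
      have h3 : (n:ℝ)/2 < n := by linarith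
      exact_mod_cast lt_of_le_of_lt h2 h3
    haveI := hP n
    have hcore := second_moment_core (P n) (lam n) hδ0 hδ1.le (hmeas n) (hindep n) (hunif n)
      (K n) hKn.le (sb n) hsb0n
      (by
        rw [hsbdef]
        exact real_bound hδ0 hδ1 hε1 hKn rfl hx1n (hKL n h1n))
    exact hcore
  have hupper : ∀ᶠ n : ℕ in atTop,
      P n {ω | ∃ Q : Finset (Fin n),
          Q.card = ⌊(1 - ε) * (2 * Real.log n / Real.log (1/δ))⌋₊ ∧
          IsTemporalClique (fun e => lam n e ω) δ Q} ≤ 1 := by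
    filter_upwards with n
    haveI := hP n
    exact prob_le_one
  have hlim : Tendsto (fun n => (ENNReal.ofReal (1 + sb n))⁻¹) atTop (nhds 1) := by
    have h1 : Tendsto (fun n => 1 + sb n) atTop (nhds 1) := by
      simpa using (tendsto_const_nhds.add hsbtend)
    have h2 : Tendsto (fun n => ENNReal.ofReal (1 + sb n)) atTop (nhds 1) := by
      have := (ENNReal.continuous_ofReal.tendsto 1).comp h1
      rw [ENNReal.ofReal_one] at this
      exact this
    have h3 := ENNReal.tendsto_inv_iff.2 h2
    simpa using h3
  exact tendsto_of_tendsto_of_tendsto_of_le_of_le' hlim tendsto_const_nhds hlower hupper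
end
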